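/- Let $p$ be an odd prime and let $GA_{2p}$ be the $1$-factorisation of $K_{2p}$ with vertex set $\mathbb{Z}_p\times\{1,2\}$ consisting of the factors $f_i$ ($i \in \mathbb{Z}_p$) and $g_i$ ($i \in \mathbb{Z}_p\setminus\{0\}$) as defined below. Then for any two distinct factors $h, h'$ of $GA_{2p}$, the union $h \cup h'$ is a Hamiltonian cycle of $K_{2p}$; that is, $GA_{2p}$ is a perfect $1$-factorisation. -/

import Mathlib

/-- A perfect matching of `G`, given as a set of edges:
a subset of the edge set such that every vertex lies in exactly one edge. -/
def IsPM {V : Type*} (G : SimpleGraph V) (f : Set (Sym2 V)) : Prop :=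
  f ⊆ G.edgeSet ∧ ∀ v : V, ∃! e, e ∈ f ∧ v ∈ e

/-- A 1-factorisation of `G`: a partition of its edge set into perfect matchings. -/
def IsOneFactorisation {V : Type*} (G : SimpleGraph V) (P : Set (Set (Sym2 V))) : Prop :=
  (∀ f ∈ P, IsPM G f) ∧ P.PairwiseDisjoint id ∧ ⋃₀ P = G.edgeSet

/-- The edge set `E` forms a Hamiltonian cycle of `G`. -/
def IsHamCycleEdges {V : Type*} [DecidableEq V] (G : SimpleGraph V) (E : Set (Sym2 V)) : Prop :=
  E ⊆ G.edgeSet ∧ ∃ (v : V) (w : G.Walk v v), w.IsHamiltonianCycle ∧ {e | e ∈ w.edges} = E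

/-- A perfect 1-factorisation: the union of any two distinct 1-factors is a Hamiltonian cycle. -/
def IsPerfectOneFactorisation {V : Type*} [DecidableEq V] (G : SimpleGraph V) (P : Set (Set (Sym2 V))) : Prop :=
  IsOneFactorisation G P ∧ ∀ f ∈ P, ∀ f' ∈ P, f ≠ f' → IsHamCycleEdges G (f ∪ f')

/-- The 1-factor `f_i` of `K_{2p}` on vertex set `ℤ_p × {1,2}` (here `Fin 2` plays the
role of `{1,2}`): the edges `{(i+j,z),(i-j,z)}` for `1 ≤ j ≤ (p-1)/2` together with the
crossing edge `{(i,1),(i,2)}`. -/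
def fFac (p : ℕ) (i : ZMod p) : Set (Sym2 (ZMod p × Fin 2)) :=
  {e | ∃ (j : ℕ) (z : Fin 2), 1 ≤ j ∧ j ≤ (p - 1) / 2 ∧
        e = s((i + (j : ZMod p), z), (i - (j : ZMod p), z))} ∪
    {s((i, 0), (i, 1))}

/-- The 1-factor `g_i` of `K_{2p}`: the edges `{(j,1),(i+j,2)}` for `j ∈ ℤ_p`. -/
def gFac (p : ℕ) (i : ZMod p) : Set (Sym2 (ZMod p × Fin 2)) :=
  {e | ∃ j : ZMod p, e = s((j, 0), (i + j, 1))}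

open SimpleGraph

variable {V : Type*}

/-- walk along `c (n-s), c (n-s+1), ..., c n` in the complete graph -/
def chainWalk (c : ℕ → V) (n : ℕ) (hadj : ∀ k < n, c k ≠ c (k+1)) :
    (s : ℕ) → s ≤ n → (⊤ : SimpleGraph V).Walk (c (n - s)) (c n)
  | 0, _ => Walk.nil.copy (by rw [Nat.sub_zero]) rfl
  | s+1, hs => Walk.cons
      (by
        have h1 : n - (s+1) < n := Nat.sub_lt (lt_of_lt_of_le (Nat.succ_pos s) hs) (Nat.succ_pos s)
        have h2 : n - (s+1) + 1 = n - s := by omega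
        simpa [top_adj, h2] using hadj _ h1)
      (chainWalk c n hadj s (le_of_lt (Nat.lt_of_lt_of_le (Nat.lt_succ_self s) hs)))

lemma chainWalk_support (c : ℕ → V) (n : ℕ) (hadj : ∀ k < n, c k ≠ c (k+1)) :
    ∀ (s : ℕ) (hs : s ≤ n),
      (chainWalk c n hadj s hs).support = (List.range (s+1)).map (fun t => c (n - s + t))
  | 0, _ => by simp [chainWalk, List.range_succ]
  | s+1, hs => by
      rw [chainWalk, Walk.support_cons,
        chainWalk_support c n hadj s (le_of_lt (Nat.lt_of_lt_of_le (Nat.lt_succ_self s) hs))]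
      conv_rhs => rw [List.range_succ_eq_map]
      simp only [List.map_cons, Nat.add_zero, List.map_map]
      congr 1
      apply List.map_congr_left
      intro t _
      simp only [Function.comp_apply]
      congr 1
      omega

lemma chainWalk_edges (c : ℕ → V) (n : ℕ) (hadj : ∀ k < n, c k ≠ c (k+1)) :
    ∀ (s : ℕ) (hs : s ≤ n),
      (chainWalk c n hadj s hs).edges
        = (List.range s).map (fun t => s(c (n - s + t), c (n - s + t + 1)))
  | 0, _ => by simp [chainWalk]
  | s+1, hs => by
      rw [chainWalk, Walk.edges_cons,
        chainWalk_edges c n hadj s (le_of_lt (Nat.lt_of_lt_of_le (Nat.lt_succ_self s) hs))]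
      conv_rhs => rw [List.range_succ_eq_map]
      simp only [List.map_cons, Nat.add_zero, List.map_map]
      have h2 : n - (s+1) + 1 = n - s := by omega
      congr 1
      · rw [h2]
      apply List.map_congr_left
      intro t _
      simp only [Function.comp_apply]
      have h3 : n - (s + 1) + t.succ = n - s + t := by omega
      rw [h3]

theorem ham_of_cycle [DecidableEq V] (n : ℕ) (hn : 3 ≤ n) (c : ℕ → V)
    (hcn : c n = c 0)
    (hinj : ∀ a < n, ∀ b < n, c a = c b → a = b)
    (hsurj : ∀ v : V, ∃ k < n, c k = v) :
    IsHamCycleEdges (⊤ : SimpleGraph V) {e | ∃ k < n, e = s(c k, c (k+1))} := by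
  have hc0 : ∀ k ≤ n, ∃ k' < n, c k' = c k := by
    intro k hk
    rcases eq_or_lt_of_le hk with rfl | hk
    · exact ⟨0, by omega, hcn.symm⟩
    · exact ⟨k, hk, rfl⟩
  have hadj : ∀ k < n, c k ≠ c (k+1) := by
    intro k hk h
    rcases Nat.lt_or_ge (k+1) n with h1 | h1
    · exact absurd (hinj k (by omega) (k+1) h1 h) (by omega)
    · have hk1 : k + 1 = n := by omega
      have : c k = c 0 := by rw [h, hk1, hcn]
      have := hinj k hk 0 (by omega) this
      omega
  have key : ∀ x ≤ n, ∀ y ≤ n, c x = c y → (x = y ∨ (x = 0 ∧ y = n) ∨ (x = n ∧ y = 0)) := by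
    intro x hx y hy h
    rcases eq_or_lt_of_le hx with rfl | hx
    · rcases eq_or_lt_of_le hy with rfl | hy
      · left; rfl
      · rw [hcn] at h
        have := hinj 0 (by omega) y hy h
        omega
    · rcases eq_or_lt_of_le hy with rfl | hy
      · rw [hcn] at h
        have := hinj x hx 0 (by omega) h
        omega
      · left; exact hinj x hx y hy h
  set w := (chainWalk c n hadj n le_rfl).copy (by rw [Nat.sub_self]) hcn with hw
  have hsup : w.support = (List.range (n+1)).map c := by
    rw [hw, Walk.support_copy, chainWalk_support]
    apply List.map_congr_left
    intro t _
    simp [Nat.sub_self]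
  have hedg : w.edges = (List.range n).map (fun t => s(c t, c (t+1))) := by
    rw [hw, Walk.edges_copy, chainWalk_edges]
    apply List.map_congr_left
    intro t _
    simp [Nat.sub_self]
  have htail : w.support.tail = (List.range n).map (fun t => c (t+1)) := by
    rw [hsup, List.range_succ_eq_map]
    simp [List.map_map, Function.comp_def]
  have htail_nodup : w.support.tail.Nodup := by
    rw [htail]
    refine List.Nodup.map_on ?_ List.nodup_range
    intro a ha b hb h
    simp only [List.mem_range] at ha hb
    have := key (a+1) (by omega) (b+1) (by omega) h
    omega
  refine ⟨?_, c 0, w, ?_, ?_⟩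
  · rintro e ⟨k, hk, rfl⟩
    rw [SimpleGraph.mem_edgeSet, top_adj]
    exact hadj k hk
  · rw [Walk.isHamiltonianCycle_iff_isCycle_and_support_count_tail_eq_one]
    constructor
    · rw [Walk.isCycle_def]
      refine ⟨⟨?_⟩, ?_, htail_nodup⟩
      · rw [hedg]
        refine List.Nodup.map_on ?_ List.nodup_range
        intro a ha b hb h
        simp only [List.mem_range] at ha hb
        rw [Sym2.eq_iff] at h
        rcases h with ⟨h1, h2⟩ | ⟨h1, h2⟩
        · have := key a (by omega) b (by omega) h1
          omega
        · have k1 := key a (by omega) (b+1) (by omega) h1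
          have k2 := key (a+1) (by omega) b (by omega) h2
          omega
      · intro hnil
        have : w.edges = [] := by rw [hnil]; rfl
        rw [hedg] at this
        have := congrArg List.length this
        simp at this
        omega
    · intro v
      obtain ⟨k, hk, rfl⟩ := hsurj v
      refine List.count_eq_one_of_mem htail_nodup ?_
      rw [htail, List.mem_map]
      rcases Nat.eq_zero_or_pos k with rfl | hk0
      · exact ⟨n-1, by simp [List.mem_range]; omega, by rw [show n-1+1 = n by omega, hcn]⟩
      · exact ⟨k-1, by simp [List.mem_range]; omega, by rw [show k-1+1 = k by omega]⟩
  · ext e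
    simp only [Set.mem_setOf_eq, hedg, List.mem_map, List.mem_range]
    constructor
    · rintro ⟨t, ht, rfl⟩
      exact ⟨t, ht, rfl⟩
    · rintro ⟨t, ht, rfl⟩
      exact ⟨t, ht, rfl⟩

lemma natCast_inj_of_lt {p : ℕ} [NeZero p] {m n : ℕ} (hm : m < p) (hn : n < p)
    (h : (m : ZMod p) = n) : m = n := by
  have := congrArg ZMod.val h
  rwa [ZMod.val_cast_of_lt hm, ZMod.val_cast_of_lt hn] at this

lemma dvd_helper1 {p : ℕ} (hp : 0 < p) {x : ℤ} (hd : (p:ℤ) ∣ x) (hb : |x| < p) : x = 0 := by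
  rcases eq_or_ne x 0 with rfl | h
  · rfl
  · have := Int.le_of_dvd (abs_pos.mpr h) ((dvd_abs _ _).mpr hd)
    omega

lemma dvd_helper2 {p : ℕ} (hodd : Odd p) {x : ℤ} (hd : (p:ℤ) ∣ x) (hb : |x| < 2*p)
    (he : Even x) : x = 0 := by
  have hp : 0 < p := hodd.pos
  obtain ⟨t, rfl⟩ := hd
  have habs : |(p:ℤ) * t| = (p:ℤ) * |t| := by
    rw [abs_mul, abs_of_nonneg (by positivity : (0:ℤ) ≤ (p:ℤ))]
  have ht2 : |t| < 2 := by
    have h2 : (p:ℤ) * |t| < (p:ℤ) * 2 := by rw [← habs]; omega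
    exact lt_of_mul_lt_mul_left h2 (by positivity)
  rw [abs_lt] at ht2
  obtain ⟨ht1, ht2⟩ := ht2
  interval_cases t
  · exfalso
    rw [mul_neg_one, even_neg, Int.even_coe_nat] at he
    exact (Nat.not_even_iff_odd.mpr hodd) he
  · ring
  · exfalso
    rw [mul_one, Int.even_coe_nat] at he
    exact (Nat.not_even_iff_odd.mpr hodd) he

lemma coeff_dvd {p : ℕ} [Fact p.Prime] {a : ZMod p} (ha : a ≠ 0) (i : ZMod p) {s1 s2 : ℤ}
    (h : i + (s1 : ZMod p) * a = i + (s2 : ZMod p) * a) : (p:ℤ) ∣ (s1 - s2) := by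
  have h' : (s1 : ZMod p) * a = (s2 : ZMod p) * a := by
    exact add_left_cancel h
  have h2 : ((s1 - s2 : ℤ) : ZMod p) * a = 0 := by
    push_cast
    rw [sub_mul, sub_eq_zero]
    exact h'
  rcases mul_eq_zero.mp h2 with h3 | h3
  · exact (ZMod.intCast_zmod_eq_zero_iff_dvd _ p).mp h3
  · exact absurd h3 ha

lemma caseG (p : ℕ) [Fact p.Prime] (hodd : Odd p) (a b : ZMod p) (hab : a ≠ b) :
    IsHamCycleEdges (⊤ : SimpleGraph (ZMod p × Fin 2)) (gFac p a ∪ gFac p b) := by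
  have hp : p.Prime := Fact.out
  have hp3 : 3 ≤ p := by
    have h1 := hp.two_le
    have h2 := Nat.odd_iff.mp hodd
    omega
  haveI : NeZero p := ⟨hp.pos.ne'⟩
  set d := a - b with hd
  have hd0 : d ≠ 0 := sub_ne_zero.mpr hab
  set c : ℕ → ZMod p × Fin 2 := fun k =>
    if k % 2 = 0 then (((k % (2*p) / 2 : ℕ) : ZMod p) * d, 0)
    else (a + ((k / 2 : ℕ) : ZMod p) * d, 1) with hc
  have hceven : ∀ m, m < p → c (2*m) = (((m:ℕ) : ZMod p) * d, 0) := by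
    intro m hm
    simp only [hc]
    rw [if_pos (by omega), Nat.mod_eq_of_lt (by omega),
      Nat.mul_div_cancel_left _ (by norm_num)]
  have hcodd : ∀ m, c (2*m+1) = (a + ((m:ℕ) : ZMod p) * d, 1) := by
    intro m
    simp only [hc]
    rw [if_neg (by omega), show (2*m+1)/2 = m by omega]
  have hstep : ∀ m, m < p → c (2*m+2) = (((m+1 : ℕ) : ZMod p) * d, 0) := by
    intro m hm
    rcases Nat.lt_or_ge (m+1) p with h | h
    · rw [show 2*m+2 = 2*(m+1) by ring, hceven (m+1) h]
    · have hm1 : m + 1 = p := by omega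
      simp only [hc]
      rw [if_pos (by omega), show 2*m+2 = 2*p by omega, Nat.mod_self, hm1,
        ZMod.natCast_self]
      norm_num
  have key : {e | ∃ k < 2*p, e = s(c k, c (k+1))} = gFac p a ∪ gFac p b := by
    ext e
    constructor
    · rintro ⟨k, hk, rfl⟩
      rcases Nat.even_or_odd k with ⟨m, hm⟩ | ⟨m, hm⟩
      · have hm' : m < p := by omega
        left
        rw [show k = 2*m by omega, hceven m hm', show 2*m+1 = 2*m+1 from rfl, hcodd m]
        exact ⟨((m:ℕ) : ZMod p) * d, rfl⟩
      · have hm' : m < p := by omega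
        right
        rw [show k = 2*m+1 by omega, hcodd m, show 2*m+1+1 = 2*m+2 from rfl, hstep m hm']
        refine ⟨((m+1:ℕ) : ZMod p) * d, ?_⟩
        rw [Sym2.eq_swap]
        have : b + ((m+1:ℕ) : ZMod p) * d = a + ((m:ℕ) : ZMod p) * d := by
          rw [hd]; push_cast; ring
        rw [this]
    · rintro (⟨j, rfl⟩ | ⟨j, rfl⟩)
      · set m := (j * d⁻¹).val with hmdef
        have hm : m < p := ZMod.val_lt _
        have hcast : ((m:ℕ) : ZMod p) = j * d⁻¹ := ZMod.natCast_rightInverse _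
        have hjd : ((m:ℕ) : ZMod p) * d = j := by
          rw [hcast]; field_simp
        exact ⟨2*m, by omega, by rw [hceven m hm, hcodd m, hjd]⟩
      · set m := (j * d⁻¹ - 1).val with hmdef
        have hm : m < p := ZMod.val_lt _
        have hcast : ((m:ℕ) : ZMod p) = j * d⁻¹ - 1 := ZMod.natCast_rightInverse _
        have h1 : ((m+1:ℕ) : ZMod p) * d = j := by
          push_cast [hcast]; field_simp; ring
        have h2 : a + ((m:ℕ) : ZMod p) * d = b + j := by
          rw [hcast, hd]; field_simp; ring
        refine ⟨2*m+1, by omega, ?_⟩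
        rw [hcodd m, show 2*m+1+1 = 2*m+2 from rfl, hstep m hm, h1, h2, Sym2.eq_swap]
  rw [← key]
  apply ham_of_cycle (2*p) (by omega) c
  · simp [hc, Nat.mul_mod_right, Nat.mod_self]
  · intro a' ha' b' hb' h
    rcases Nat.even_or_odd a' with ⟨m1, hm1⟩ | ⟨m1, hm1⟩ <;>
      rcases Nat.even_or_odd b' with ⟨m2, hm2⟩ | ⟨m2, hm2⟩
    · rw [show a' = 2*m1 by omega, hceven m1 (by omega),
        show b' = 2*m2 by omega, hceven m2 (by omega)] at h
      simp only [Prod.mk.injEq] at h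
      have := mul_right_cancel₀ hd0 h.1
      have := natCast_inj_of_lt (show m1 < p by omega) (show m2 < p by omega) this
      omega
    · rw [show a' = 2*m1 by omega, hceven m1 (by omega),
        show b' = 2*m2+1 by omega, hcodd m2] at h
      simp only [Prod.mk.injEq] at h
      exact absurd h.2 (by decide)
    · rw [show a' = 2*m1+1 by omega, hcodd m1,
        show b' = 2*m2 by omega, hceven m2 (by omega)] at h
      simp only [Prod.mk.injEq] at h
      exact absurd h.2 (by decide)
    · rw [show a' = 2*m1+1 by omega, hcodd m1,
        show b' = 2*m2+1 by omega, hcodd m2] at h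
      simp only [Prod.mk.injEq] at h
      have := add_left_cancel h.1
      have := mul_right_cancel₀ hd0 this
      have := natCast_inj_of_lt (show m1 < p by omega) (show m2 < p by omega) this
      omega
  · rintro ⟨x, z⟩
    fin_cases z
    · set m := (x * d⁻¹).val with hmdef
      have hm : m < p := ZMod.val_lt _
      have hcast : ((m:ℕ) : ZMod p) = x * d⁻¹ := ZMod.natCast_rightInverse _
      refine ⟨2*m, by omega, ?_⟩
      rw [hceven m hm, hcast]
      congr 1
      field_simp
    · set m := ((x - a) * d⁻¹).val with hmdef
      have hm : m < p := ZMod.val_lt _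
      have hcast : ((m:ℕ) : ZMod p) = (x - a) * d⁻¹ := ZMod.natCast_rightInverse _
      refine ⟨2*m+1, by omega, ?_⟩
      rw [hcodd m, hcast]
      congr 1
      field_simp
      ring

lemma fFac_eq (p : ℕ) [Fact p.Prime] (hodd : Odd p) (i : ZMod p) :
    fFac p i = {e | ∃ (x : ZMod p) (z : Fin 2), x ≠ i ∧ e = s((x, z), (2*i - x, z))} ∪
      {s((i, (0 : Fin 2)), (i, 1))} := by
  have hp : p.Prime := Fact.out
  have hp3 : 3 ≤ p := by
    have h1 := hp.two_le
    have h2 := Nat.odd_iff.mp hodd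
    omega
  haveI : NeZero p := ⟨hp.pos.ne'⟩
  have hp2 := Nat.odd_iff.mp hodd
  ext e
  constructor
  · rintro (⟨j, z, hj1, hj2, rfl⟩ | rfl)
    · left
      refine ⟨i + (j : ZMod p), z, ?_, ?_⟩
      · intro h
        have : (j : ZMod p) = 0 := by linear_combination h
        have := (ZMod.natCast_eq_zero_iff j p).mp this
        have := Nat.le_of_dvd (by omega) this
        omega
      · congr 2
        ring
    · right; rfl
  · rintro (⟨x, z, hx, rfl⟩ | rfl)
    · left
      set u := x - i with hu
      have hu0 : u ≠ 0 := sub_ne_zero.mpr hx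
      set v := u.val with hv
      have hv1 : v < p := ZMod.val_lt u
      have hv0 : v ≠ 0 := fun h => hu0 ((ZMod.val_eq_zero u).mp h)
      have hvc : ((v : ℕ) : ZMod p) = u := ZMod.natCast_rightInverse u
      rcases Nat.lt_or_ge ((p-1)/2) v with h | h
      · -- use j = p - v
        refine ⟨p - v, z, by omega, by omega, ?_⟩
        have hc : ((p - v : ℕ) : ZMod p) = -u := by
          rw [Nat.cast_sub (by omega), ZMod.natCast_self, hvc]; ring
        rw [hc, Sym2.eq_swap]
        congr 2 <;> rw [hu] <;> ring
      · refine ⟨v, z, by omega, h, ?_⟩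
        rw [hvc]
        congr 2 <;> rw [hu] <;> ring
    · right; rfl

lemma caseFG (p : ℕ) [Fact p.Prime] (hodd : Odd p) (i a : ZMod p) (ha : a ≠ 0) :
    IsHamCycleEdges (⊤ : SimpleGraph (ZMod p × Fin 2)) (fFac p i ∪ gFac p a) := by
  have hp : p.Prime := Fact.out
  have hp3 : 3 ≤ p := by
    have h1 := hp.two_le
    have h2 := Nat.odd_iff.mp hodd
    omega
  have hp2 := Nat.odd_iff.mp hodd
  haveI : NeZero p := ⟨hp.pos.ne'⟩
  set σ : ℕ → ℤ := fun r => if r % 4 = 3 ∨ r % 4 = 0 then (r/2 : ℤ) else -(r/2 : ℤ) with hσ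
  set lvl : ℕ → Fin 2 := fun r =>
    if r = 0 then 0 else if r % 4 = 0 ∨ r % 4 = 1 then 1 else 0 with hlvl
  set c : ℕ → ZMod p × Fin 2 :=
    fun k => (i + ((σ (k % (2*p)) : ℤ) : ZMod p) * a, lvl (k % (2*p))) with hc
  have hceval : ∀ r < 2*p, c r = (i + ((σ r : ℤ) : ZMod p) * a, lvl r) := by
    intro r hr
    simp only [hc, Nat.mod_eq_of_lt hr]
  have hσ_abs : ∀ r < 2*p, |σ r| < p := by
    intro r hr
    simp only [hσ]
    split <;> rw [abs_lt] <;> constructor <;> omega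
  have hσ_par : ∀ r, σ r % 2 = ((r:ℤ)/2) % 2 := by
    intro r
    simp only [hσ]
    split <;> omega
  -- injectivity helper: same value at r1 r2 < 2p forces r1 = r2
  have hinj : ∀ r1 < 2*p, ∀ r2 < 2*p, c r1 = c r2 → r1 = r2 := by
    intro r1 h1 r2 h2 h
    rw [hceval r1 h1, hceval r2 h2, Prod.mk.injEq] at h
    obtain ⟨hval, hl⟩ := h
    have hdvd : (p:ℤ) ∣ (σ r1 - σ r2) := coeff_dvd ha i hval
    -- level equality constraints
    simp only [hlvl] at hl
    rcases eq_or_ne r1 0 with rfl | hr1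
    · -- σ r2 = 0 by helper1
      have hσ1 : σ 0 = 0 := by simp [hσ]
      rw [hσ1, zero_sub, dvd_neg] at hdvd
      have := dvd_helper1 hp.pos hdvd (hσ_abs r2 h2)
      rw [if_pos rfl] at hl
      by_cases hr2 : r2 = 0
      · omega
      · rw [if_neg hr2] at hl
        -- lvl r2 = 0 so r2 % 4 ∈ {2,3}
        split at hl
        · exact absurd hl.symm (by decide)
        · exfalso
          simp only [hσ] at this
          split at this <;> omega
    · rcases eq_or_ne r2 0 with rfl | hr2
      · have hσ2 : σ 0 = 0 := by simp [hσ]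
        rw [hσ2, sub_zero] at hdvd
        have := dvd_helper1 hp.pos hdvd (hσ_abs r1 h1)
        rw [if_pos rfl, if_neg hr1] at hl
        split at hl
        · exact absurd hl (by decide)
        · exfalso
          simp only [hσ] at this
          split at this <;> omega
      · rw [if_neg hr1, if_neg hr2] at hl
        -- same parity of r/2 from level equality
        have hpar : (r1/2) % 2 = (r2/2) % 2 := by
          split at hl <;> split at hl
          · omega
          · exact absurd hl (by decide)
          · exact absurd hl (by decide)
          · omega
        have heven : Even (σ r1 - σ r2) := by
          have p1 := hσ_par r1
          have p2 := hσ_par r2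
          rw [Int.even_iff]
          omega
        have habs : |σ r1 - σ r2| < 2*p := by
          have b1 := hσ_abs r1 h1
          have b2 := hσ_abs r2 h2
          rw [abs_lt] at *
          constructor <;> omega
        have h0 := dvd_helper2 hodd hdvd habs heven
        simp only [hσ] at h0
        split at h0 <;> split at h0 <;> omega
  have hc2p : c (2*p) = (i, 0) := by
    simp only [hc, Nat.mod_self]
    norm_num [hσ, hlvl]
  have hc0 : c 0 = (i, 0) := by
    rw [hceval 0 (by omega)]
    norm_num [hσ, hlvl]
  have hc1 : c 1 = (i, 1) := by
    rw [hceval 1 (by omega), Prod.mk.injEq]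
    constructor
    · have h1 : σ 1 = 0 := by simp only [hσ]; split <;> omega
      rw [h1]; push_cast; ring
    · simp [hlvl]
  have hmk : ∀ (A C : ZMod p) (z1 : Fin 2) (B D : ZMod p) (z2 : Fin 2),
      A = C → B = D → s((A,z1),(B,z2)) = s((C,z1),(D,z2)) := by
    intro A C z1 B D z2 h1 h2; rw [h1, h2]
  have hmk' : ∀ (A C : ZMod p) (z1 : Fin 2) (B D : ZMod p) (z2 : Fin 2),
      A = C → B = D → s((A,z1),(B,z2)) = s((D,z2),(C,z1)) := by
    intro A C z1 B D z2 h1 h2; rw [h1, h2, Sym2.eq_swap]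
  have hcast1 : ∀ v : ℕ, v ≤ p → ((-((p - v : ℕ) : ℤ) : ℤ) : ZMod p) = (v : ZMod p) := by
    intro v hv
    push_cast [Nat.cast_sub hv]
    rw [ZMod.natCast_self]
    ring
  have hcast2 : ∀ v : ℕ, v ≤ p → (((p - v : ℕ) : ℤ) : ZMod p) = -(v : ZMod p) := by
    intro v hv
    push_cast [Nat.cast_sub hv]
    rw [ZMod.natCast_self]
    ring
  -- data for a generic vertex
  have hval : ∀ x : ZMod p,
      i + ((((x - i) * a⁻¹).val : ℕ) : ZMod p) * a = x := by
    intro x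
    rw [ZMod.natCast_rightInverse]
    field_simp
    ring
  have hval0 : ∀ x : ZMod p, ((x - i) * a⁻¹).val = 0 ↔ x = i := by
    intro x
    constructor
    · intro h
      have := hval x
      rw [h] at this
      simpa using this.symm
    · intro h
      rw [h, sub_self, zero_mul, ZMod.val_zero]
  have hsurj : ∀ v : ZMod p × Fin 2, ∃ k < 2*p, c k = v := by
    rintro ⟨x, z⟩
    set v := ((x - i) * a⁻¹).val with hvdef
    have hvp : v < p := ZMod.val_lt _
    have hx : i + (v : ZMod p) * a = x := hval x
    fin_cases z
    · rcases eq_or_ne v 0 with hv0 | hv0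
      · refine ⟨0, by omega, ?_⟩
        rw [(hval0 x).mp hv0]
        simpa using hc0
      · rcases Nat.even_or_odd v with ⟨w, hw⟩ | ⟨w, hw⟩
        · refine ⟨2*(p-v), by omega, ?_⟩
          rw [hceval _ (by omega), Prod.mk.injEq]
          refine ⟨?_, ?_⟩
          · have h1 : σ (2*(p-v)) = -((p - v : ℕ) : ℤ) := by
              simp only [hσ]; split <;> omega
            rw [h1, hcast1 v (by omega), hx]
          · simp only [hlvl]; rw [if_neg (by omega), if_neg (by omega)]
            rfl
        · refine ⟨2*v+1, by omega, ?_⟩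
          rw [hceval _ (by omega), Prod.mk.injEq]
          refine ⟨?_, ?_⟩
          · have h1 : σ (2*v+1) = (v : ℤ) := by
              simp only [hσ]; split <;> omega
            rw [h1]
            push_cast
            exact hx
          · simp only [hlvl]; rw [if_neg (by omega), if_neg (by omega)]
            rfl
    · rcases eq_or_ne v 0 with hv0 | hv0
      · refine ⟨1, by omega, ?_⟩
        rw [(hval0 x).mp hv0]
        simpa using hc1
      · rcases Nat.even_or_odd v with ⟨w, hw⟩ | ⟨w, hw⟩
        · refine ⟨2*v, by omega, ?_⟩
          rw [hceval _ (by omega), Prod.mk.injEq]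
          refine ⟨?_, ?_⟩
          · have h1 : σ (2*v) = (v : ℤ) := by
              simp only [hσ]; split <;> omega
            rw [h1]
            push_cast
            exact hx
          · simp only [hlvl]; rw [if_neg (by omega), if_pos (by omega)]
            rfl
        · refine ⟨2*(p-v)+1, by omega, ?_⟩
          rw [hceval _ (by omega), Prod.mk.injEq]
          refine ⟨?_, ?_⟩
          · have h1 : σ (2*(p-v)+1) = -((p - v : ℕ) : ℤ) := by
              simp only [hσ]; split <;> omega
            rw [h1, hcast1 v (by omega), hx]
          · simp only [hlvl]; rw [if_neg (by omega), if_pos (by omega)]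
            rfl
  have hne0 : ∀ m : ℕ, 0 < m → m < p → ((m : ℕ) : ZMod p) ≠ 0 := by
    intro m h1 h2 h
    have := (ZMod.natCast_eq_zero_iff m p).mp h
    have := Nat.le_of_dvd h1 this
    omega
  have key : {e | ∃ k < 2*p, e = s(c k, c (k+1))} = fFac p i ∪ gFac p a := by
    rw [fFac_eq p hodd i]
    ext e
    constructor
    · rintro ⟨k, hk, rfl⟩
      by_cases hk0 : k = 0
      · subst hk0
        rw [hc0, hc1]
        exact Or.inl (Or.inr rfl)
      by_cases hklast : k = 2*p - 1
      · subst hklast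
        right
        rw [hceval _ (by omega), show 2*p-1+1 = 2*p by omega, hc2p]
        have h1 : σ (2*p-1) = -(((p:ℕ) - 1 : ℕ) : ℤ) := by
          simp only [hσ]; split <;> omega
        have h2 : lvl (2*p-1) = 1 := by
          simp only [hlvl]; rw [if_neg (by omega), if_pos (by omega)]
        rw [h1, h2]
        refine ⟨i, (hmk' _ (a+i) 1 i i 0 ?_ rfl)⟩
        rw [hcast1 1 (by omega)]
        push_cast
        ring
      rcases (show k % 4 = 0 ∨ k % 4 = 1 ∨ k % 4 = 2 ∨ k % 4 = 3 by omega) with h4 | h4 | h4 | h4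
      · -- k % 4 = 0, k ≠ 0 : f_i edge at level 1
        left; left
        rw [hceval _ (by omega), hceval _ (by omega)]
        have h1 : σ k = ((k/2 : ℕ) : ℤ) := by simp only [hσ]; split <;> omega
        have h2 : σ (k+1) = -((k/2 : ℕ) : ℤ) := by simp only [hσ]; split <;> omega
        have hl1 : lvl k = 1 := by
          simp only [hlvl]; rw [if_neg (by omega), if_pos (by omega)]
        have hl2 : lvl (k+1) = 1 := by
          simp only [hlvl]; rw [if_neg (by omega), if_pos (by omega)]
        rw [h1, h2, hl1, hl2]
        refine ⟨i + (((k/2 : ℕ) : ℤ) : ZMod p) * a, 1, ?_,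
          (hmk _ _ 1 _ _ 1 rfl (by push_cast; ring)).symm⟩
        intro h
        have h' : (((k/2 : ℕ) : ℤ) : ZMod p) * a = 0 := by linear_combination h
        rcases mul_eq_zero.mp h' with h3 | h3
        · rw [Int.cast_natCast] at h3
          exact hne0 (k/2) (by omega) (by omega) h3
        · exact ha h3
      · -- k % 4 = 1, k ≠ 2p-1 : g edge
        right
        rw [hceval _ (by omega), hceval _ (by omega)]
        have h1 : σ k = -((k/2 : ℕ) : ℤ) := by simp only [hσ]; split <;> omega
        have h2 : σ (k+1) = -((k/2 : ℕ) : ℤ) - 1 := by simp only [hσ]; split <;> omega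
        have hl1 : lvl k = 1 := by
          simp only [hlvl]; rw [if_neg (by omega), if_pos (by omega)]
        have hl2 : lvl (k+1) = 0 := by
          simp only [hlvl]; rw [if_neg (by omega), if_neg (by omega)]
        rw [h1, h2, hl1, hl2]
        exact ⟨i + ((-((k/2 : ℕ) : ℤ) - 1 : ℤ) : ZMod p) * a,
          (hmk' _ _ 0 _ _ 1 rfl (by push_cast; ring)).symm⟩
      · -- k % 4 = 2 : f_i edge at level 0
        left; left
        rw [hceval _ (by omega), hceval _ (by omega)]
        have h1 : σ k = -((k/2 : ℕ) : ℤ) := by simp only [hσ]; split <;> omega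
        have h2 : σ (k+1) = ((k/2 : ℕ) : ℤ) := by simp only [hσ]; split <;> omega
        have hl1 : lvl k = 0 := by
          simp only [hlvl]; rw [if_neg (by omega), if_neg (by omega)]
        have hl2 : lvl (k+1) = 0 := by
          simp only [hlvl]; rw [if_neg (by omega), if_neg (by omega)]
        rw [h1, h2, hl1, hl2]
        refine ⟨i + ((-((k/2 : ℕ) : ℤ) : ℤ) : ZMod p) * a, 0, ?_,
          (hmk _ _ 0 _ _ 0 rfl (by push_cast; ring)).symm⟩
        intro h
        have h' : ((-((k/2 : ℕ) : ℤ) : ℤ) : ZMod p) * a = 0 := by linear_combination h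
        rcases mul_eq_zero.mp h' with h3 | h3
        · rw [Int.cast_neg, Int.cast_natCast, neg_eq_zero] at h3
          exact hne0 (k/2) (by omega) (by omega) h3
        · exact ha h3
      · -- k % 4 = 3 : g edge
        right
        rw [hceval _ (by omega), hceval _ (by omega)]
        have h1 : σ k = ((k/2 : ℕ) : ℤ) := by simp only [hσ]; split <;> omega
        have h2 : σ (k+1) = ((k/2 : ℕ) : ℤ) + 1 := by simp only [hσ]; split <;> omega
        have hl1 : lvl k = 0 := by
          simp only [hlvl]; rw [if_neg (by omega), if_neg (by omega)]
        have hl2 : lvl (k+1) = 1 := by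
          simp only [hlvl]; rw [if_neg (by omega), if_pos (by omega)]
        rw [h1, h2, hl1, hl2]
        exact ⟨i + ((((k/2 : ℕ) : ℤ) : ℤ) : ZMod p) * a,
          (hmk _ _ 0 _ _ 1 rfl (by push_cast; ring)).symm⟩
    · rintro ((⟨x, z, hxne, rfl⟩ | rfl) | ⟨j, rfl⟩)
      · -- f edge
        set v := ((x - i) * a⁻¹).val with hvdef
        have hvp : v < p := ZMod.val_lt _
        have hx : i + (v : ZMod p) * a = x := hval x
        have hv0 : v ≠ 0 := fun h => hxne ((hval0 x).mp h)
        fin_cases z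
        · rcases Nat.even_or_odd v with ⟨w, hw⟩ | ⟨w, hw⟩
          · -- v even: k = 2*(p-v)
            refine ⟨2*(p-v), by omega, ?_⟩
            rw [hceval _ (by omega), hceval _ (by omega)]
            have h1 : σ (2*(p-v)) = -(((p-v : ℕ)) : ℤ) := by
              simp only [hσ]; split <;> omega
            have h2 : σ (2*(p-v)+1) = (((p-v : ℕ)) : ℤ) := by
              simp only [hσ]; split <;> omega
            have hl1 : lvl (2*(p-v)) = 0 := by
              simp only [hlvl]; rw [if_neg (by omega), if_neg (by omega)]
            have hl2 : lvl (2*(p-v)+1) = 0 := by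
              simp only [hlvl]; rw [if_neg (by omega), if_neg (by omega)]
            rw [h1, h2, hl1, hl2]
            refine hmk _ _ _ _ _ _ ?_ ?_
            · rw [hcast1 v (by omega)]; exact hx.symm
            · rw [hcast2 v (by omega)]; linear_combination hx
          · -- v odd: k = 2*v
            refine ⟨2*v, by omega, ?_⟩
            rw [hceval _ (by omega), hceval _ (by omega)]
            have h1 : σ (2*v) = -((v:ℕ) : ℤ) := by
              simp only [hσ]; split <;> omega
            have h2 : σ (2*v+1) = ((v:ℕ) : ℤ) := by
              simp only [hσ]; split <;> omega
            have hl1 : lvl (2*v) = 0 := by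
              simp only [hlvl]; rw [if_neg (by omega), if_neg (by omega)]
            have hl2 : lvl (2*v+1) = 0 := by
              simp only [hlvl]; rw [if_neg (by omega), if_neg (by omega)]
            rw [h1, h2, hl1, hl2]
            refine hmk' _ _ _ _ _ _ ?_ ?_
            · push_cast
              linear_combination -hx
            · push_cast
              linear_combination hx
        · rcases Nat.even_or_odd v with ⟨w, hw⟩ | ⟨w, hw⟩
          · -- v even: k = 2*v
            refine ⟨2*v, by omega, ?_⟩
            rw [hceval _ (by omega), hceval _ (by omega)]
            have h1 : σ (2*v) = ((v:ℕ) : ℤ) := by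
              simp only [hσ]; split <;> omega
            have h2 : σ (2*v+1) = -((v:ℕ) : ℤ) := by
              simp only [hσ]; split <;> omega
            have hl1 : lvl (2*v) = 1 := by
              simp only [hlvl]; rw [if_neg (by omega), if_pos (by omega)]
            have hl2 : lvl (2*v+1) = 1 := by
              simp only [hlvl]; rw [if_neg (by omega), if_pos (by omega)]
            rw [h1, h2, hl1, hl2]
            refine hmk _ _ _ _ _ _ ?_ ?_
            · push_cast
              linear_combination -hx
            · push_cast
              linear_combination hx
          · -- v odd: k = 2*(p-v)
            refine ⟨2*(p-v), by omega, ?_⟩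
            rw [hceval _ (by omega), hceval _ (by omega)]
            have h1 : σ (2*(p-v)) = (((p-v : ℕ)) : ℤ) := by
              simp only [hσ]; split <;> omega
            have h2 : σ (2*(p-v)+1) = -(((p-v : ℕ)) : ℤ) := by
              simp only [hσ]; split <;> omega
            have hl1 : lvl (2*(p-v)) = 1 := by
              simp only [hlvl]; rw [if_neg (by omega), if_pos (by omega)]
            have hl2 : lvl (2*(p-v)+1) = 1 := by
              simp only [hlvl]; rw [if_neg (by omega), if_pos (by omega)]
            rw [h1, h2, hl1, hl2]
            refine hmk' _ _ _ _ _ _ ?_ ?_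
            · rw [hcast1 v (by omega)]; linear_combination -hx
            · rw [hcast2 v (by omega)]; linear_combination hx
      · -- crossing edge
        exact ⟨0, by omega, by rw [hc0, hc1]⟩
      · -- g edge s((j,0),(a+j,1))
        set v := ((j - i) * a⁻¹).val with hvdef
        have hvp : v < p := ZMod.val_lt _
        have hx : i + (v : ZMod p) * a = j := hval j
        rcases eq_or_ne v 0 with hv0 | hv0
        · -- j = i : k = 2p-1
          have hji : j = i := (hval0 j).mp hv0
          refine ⟨2*p-1, by omega, ?_⟩
          rw [hceval _ (by omega), show 2*p-1+1 = 2*p by omega, hc2p]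
          have h1 : σ (2*p-1) = -(((p:ℕ) - 1 : ℕ) : ℤ) := by
            simp only [hσ]; split <;> omega
          have hl1 : lvl (2*p-1) = 1 := by
            simp only [hlvl]; rw [if_neg (by omega), if_pos (by omega)]
          rw [h1, hl1, hji]
          refine hmk' _ _ _ _ _ _ rfl ?_
          rw [hcast1 1 (by omega)]
          push_cast
          ring
        · rcases Nat.even_or_odd v with ⟨w, hw⟩ | ⟨w, hw⟩
          · -- v even ≠ 0 : k = 2*(p-v)-1
            refine ⟨2*(p-v)-1, by omega, ?_⟩
            rw [hceval _ (by omega), show 2*(p-v)-1+1 = 2*(p-v) by omega,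
              hceval _ (by omega)]
            have h1 : σ (2*(p-v)-1) = -((((p-v : ℕ)) : ℤ) - 1) := by
              simp only [hσ]; split <;> omega
            have h2 : σ (2*(p-v)) = -(((p-v : ℕ)) : ℤ) := by
              simp only [hσ]; split <;> omega
            have hl1 : lvl (2*(p-v)-1) = 1 := by
              simp only [hlvl]; rw [if_neg (by omega), if_pos (by omega)]
            have hl2 : lvl (2*(p-v)) = 0 := by
              simp only [hlvl]; rw [if_neg (by omega), if_neg (by omega)]
            rw [h1, h2, hl1, hl2]
            refine hmk' _ _ _ _ _ _ ?_ ?_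
            · rw [hcast1 v (by omega)]; exact hx.symm
            · have hc3 : ((-((((p-v : ℕ)) : ℤ) - 1) : ℤ) : ZMod p)
                  = (v : ZMod p) + 1 := by
                have : (-((((p-v : ℕ)) : ℤ) - 1) : ℤ) = -(((p-v : ℕ)) : ℤ) + 1 := by ring
                rw [this]
                push_cast [Nat.cast_sub (by omega : v ≤ p)]
                rw [ZMod.natCast_self]
                ring
              rw [hc3]
              linear_combination -hx
          · -- v odd : k = 2*v+1
            refine ⟨2*v+1, by omega, ?_⟩
            rw [hceval _ (by omega), hceval _ (by omega)]
            have h1 : σ (2*v+1) = ((v:ℕ) : ℤ) := by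
              simp only [hσ]; split <;> omega
            have h2 : σ (2*v+1+1) = ((v:ℕ) : ℤ) + 1 := by
              simp only [hσ]; split <;> omega
            have hl1 : lvl (2*v+1) = 0 := by
              simp only [hlvl]; rw [if_neg (by omega), if_neg (by omega)]
            have hl2 : lvl (2*v+1+1) = 1 := by
              simp only [hlvl]; rw [if_neg (by omega), if_pos (by omega)]
            rw [h1, h2, hl1, hl2]
            refine hmk _ _ _ _ _ _ ?_ ?_
            · push_cast
              linear_combination -hx
            · push_cast
              linear_combination -hx
  rw [← key]
  apply ham_of_cycle (2*p) (by omega) c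
  · rw [hc2p, hc0]
  · exact hinj
  · exact hsurj

lemma caseFF (p : ℕ) [Fact p.Prime] (hodd : Odd p) (i1 d : ZMod p) (hd0 : d ≠ 0) :
    IsHamCycleEdges (⊤ : SimpleGraph (ZMod p × Fin 2)) (fFac p i1 ∪ fFac p (i1 + d)) := by
  have hp : p.Prime := Fact.out
  have hp3 : 3 ≤ p := by
    have h1 := hp.two_le
    have h2 := Nat.odd_iff.mp hodd
    omega
  have hp2 := Nat.odd_iff.mp hodd
  haveI : NeZero p := ⟨hp.pos.ne'⟩
  set E : ℕ → ℤ := fun r => if r % 2 = 1 then (r:ℤ)+1 else -(r:ℤ) with hE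
  set c : ℕ → ZMod p × Fin 2 := fun k =>
    if k % (2*p) < p then (i1 + ((E (k % (2*p)) : ℤ) : ZMod p) * d, 0)
    else (i1 + d - ((E (k % (2*p) - p) : ℤ) : ZMod p) * d, 1) with hc
  have hceval0 : ∀ r < p, c r = (i1 + ((E r : ℤ) : ZMod p) * d, 0) := by
    intro r hr
    simp only [hc, Nat.mod_eq_of_lt (by omega : r < 2*p)]
    rw [if_pos hr]
  have hceval1 : ∀ r, p ≤ r → r < 2*p → c r = (i1 + d - ((E (r - p) : ℤ) : ZMod p) * d, 1) := by
    intro r hr1 hr2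
    simp only [hc, Nat.mod_eq_of_lt hr2]
    rw [if_neg (by omega)]
  have hE0 : E 0 = 0 := by simp [hE]
  have hc0 : c 0 = (i1, 0) := by
    rw [hceval0 0 (by omega), hE0]
    norm_num
  have hc2p : c (2*p) = (i1, 0) := by
    simp only [hc, Nat.mod_self]
    rw [if_pos (by omega), hE0]
    norm_num
  have hcp : c p = (i1 + d, 1) := by
    rw [hceval1 p le_rfl (by omega), Nat.sub_self, hE0]
    norm_num
  have hE_abs : ∀ r < p, |E r| < p := by
    intro r hr
    simp only [hE]
    split <;> rw [abs_lt] <;> constructor <;> omega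
  have hE_even : ∀ r, E r % 2 = 0 := by
    intro r
    simp only [hE]
    split <;> omega
  have hEeq : ∀ r1 < p, ∀ r2 < p, E r1 = E r2 → r1 = r2 := by
    intro r1 h1 r2 h2 h
    simp only [hE] at h
    split at h <;> split at h <;> omega
  have hdiff : ∀ r1 < p, ∀ r2 < p, (p:ℤ) ∣ (E r1 - E r2) → r1 = r2 := by
    intro r1 h1 r2 h2 hdvd
    have habs : |E r1 - E r2| < 2*p := by
      have b1 := hE_abs r1 h1
      have b2 := hE_abs r2 h2
      rw [abs_lt] at *
      constructor <;> omega
    have heven : Even (E r1 - E r2) := by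
      have e1 := hE_even r1
      have e2 := hE_even r2
      rw [Int.even_iff]
      omega
    exact hEeq r1 h1 r2 h2 (by linarith [dvd_helper2 hodd hdvd habs heven])
  have hinj : ∀ r1 < 2*p, ∀ r2 < 2*p, c r1 = c r2 → r1 = r2 := by
    intro r1 h1 r2 h2 h
    rcases Nat.lt_or_ge r1 p with hr1 | hr1 <;> rcases Nat.lt_or_ge r2 p with hr2 | hr2
    · rw [hceval0 r1 hr1, hceval0 r2 hr2, Prod.mk.injEq] at h
      exact hdiff r1 hr1 r2 hr2 (coeff_dvd hd0 i1 h.1)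
    · rw [hceval0 r1 hr1, hceval1 r2 hr2 h2, Prod.mk.injEq] at h
      exact absurd h.2 (by decide)
    · rw [hceval1 r1 hr1 h1, hceval0 r2 hr2, Prod.mk.injEq] at h
      exact absurd h.2 (by decide)
    · rw [hceval1 r1 hr1 h1, hceval1 r2 hr2 h2, Prod.mk.injEq] at h
      have h' : i1 + ((-(E (r1-p)) : ℤ) : ZMod p) * d = i1 + ((-(E (r2-p)) : ℤ) : ZMod p) * d := by
        push_cast
        linear_combination h.1
      have := hdiff (r1-p) (by omega) (r2-p) (by omega)
        (by
          have h2 := coeff_dvd hd0 i1 h'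
          have h3 : -(E (r1-p)) - -(E (r2-p)) = -(E (r1-p) - E (r2-p)) := by ring
          rw [h3, dvd_neg] at h2
          exact h2)
      omega
  have hcast1 : ∀ v : ℕ, v ≤ p → ((-((p - v : ℕ) : ℤ) : ℤ) : ZMod p) = (v : ZMod p) := by
    intro v hv
    push_cast [Nat.cast_sub hv]
    rw [ZMod.natCast_self]
    ring
  have hcast2 : ∀ v : ℕ, v ≤ p → (((p - v : ℕ) : ℤ) : ZMod p) = -(v : ZMod p) := by
    intro v hv
    push_cast [Nat.cast_sub hv]
    rw [ZMod.natCast_self]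
    ring
  have hval : ∀ x y : ZMod p, x = y + (((x - y) * d⁻¹).val : ZMod p) * d := by
    intro x y
    rw [ZMod.natCast_rightInverse]
    field_simp
    ring
  have hval0 : ∀ x y : ZMod p, ((x - y) * d⁻¹).val = 0 ↔ x = y := by
    intro x y
    constructor
    · intro h
      have := hval x y
      rw [h] at this
      simpa using this
    · intro h
      rw [h, sub_self, zero_mul, ZMod.val_zero]
  have hne0 : ∀ m : ℕ, 0 < m → m < p → ((m : ℕ) : ZMod p) ≠ 0 := by
    intro m h1 h2 h
    have := (ZMod.natCast_eq_zero_iff m p).mp h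
    have := Nat.le_of_dvd h1 this
    omega
  have hmk : ∀ (A C : ZMod p) (z1 : Fin 2) (B D : ZMod p) (z2 : Fin 2),
      A = C → B = D → s((A,z1),(B,z2)) = s((C,z1),(D,z2)) := by
    intro A C z1 B D z2 h1 h2; rw [h1, h2]
  have hmk' : ∀ (A C : ZMod p) (z1 : Fin 2) (B D : ZMod p) (z2 : Fin 2),
      A = C → B = D → s((A,z1),(B,z2)) = s((D,z2),(C,z1)) := by
    intro A C z1 B D z2 h1 h2; rw [h1, h2, Sym2.eq_swap]
  have hsurj : ∀ v : ZMod p × Fin 2, ∃ k < 2*p, c k = v := by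
    rintro ⟨x, z⟩
    fin_cases z
    · set v := ((x - i1) * d⁻¹).val with hvdef
      have hvp : v < p := ZMod.val_lt _
      have hx : x = i1 + (v : ZMod p) * d := hval x i1
      rcases eq_or_ne v 0 with hv0 | hv0
      · have hxi : x = i1 := by rw [hx, hv0]; norm_num
        refine ⟨0, by omega, ?_⟩
        rw [hxi]
        simpa using hc0
      · rcases Nat.even_or_odd v with ⟨w, hw⟩ | ⟨w, hw⟩
        · -- v even ≠ 0 : r = v - 1 odd
          refine ⟨v-1, by omega, ?_⟩
          rw [hceval0 (v-1) (by omega), Prod.mk.injEq]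
          have h1 : E (v-1) = (v : ℤ) := by simp only [hE]; split <;> omega
          refine ⟨?_, rfl⟩
          rw [h1]
          push_cast
          exact hx.symm
        · -- v odd : r = p - v even
          refine ⟨p-v, by omega, ?_⟩
          rw [hceval0 (p-v) (by omega), Prod.mk.injEq]
          have h1 : E (p-v) = -(((p-v:ℕ)) : ℤ) := by simp only [hE]; split <;> omega
          refine ⟨?_, rfl⟩
          rw [h1, hcast1 v (by omega)]
          exact hx.symm
    · set v := (((i1 + d) - x) * d⁻¹).val with hvdef
      have hvp : v < p := ZMod.val_lt _
      have hx : (i1 + d) = x + (v : ZMod p) * d := hval (i1+d) x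
      rcases eq_or_ne v 0 with hv0 | hv0
      · refine ⟨p, by omega, ?_⟩
        have hxi : x = i1 + d := by
          rw [hx, hv0]; norm_num
        rw [hxi]
        simpa using hcp
      · rcases Nat.even_or_odd v with ⟨w, hw⟩ | ⟨w, hw⟩
        · refine ⟨p + (v-1), by omega, ?_⟩
          rw [hceval1 _ (by omega) (by omega), show p + (v-1) - p = v-1 by omega,
            Prod.mk.injEq]
          have h1 : E (v-1) = (v : ℤ) := by simp only [hE]; split <;> omega
          refine ⟨?_, rfl⟩
          rw [h1]
          push_cast
          linear_combination hx
        · refine ⟨p + (p-v), by omega, ?_⟩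
          rw [hceval1 _ (by omega) (by omega), show p + (p-v) - p = p-v by omega,
            Prod.mk.injEq]
          have h1 : E (p-v) = -(((p-v:ℕ)) : ℤ) := by simp only [hE]; split <;> omega
          refine ⟨?_, rfl⟩
          rw [h1, hcast1 v (by omega)]
          linear_combination hx
  have key : {e | ∃ k < 2*p, e = s(c k, c (k+1))} = fFac p i1 ∪ fFac p (i1 + d) := by
    rw [fFac_eq p hodd i1, fFac_eq p hodd (i1+d)]
    ext e
    constructor
    · rintro ⟨k, hk, rfl⟩
      by_cases hkp1 : k = p-1
      · subst hkp1
        right; right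
        rw [hceval0 (p-1) (by omega), show p-1+1 = p by omega, hcp]
        have h1 : E (p-1) = -(((p-1:ℕ)) : ℤ) := by simp only [hE]; split <;> omega
        rw [h1, hcast1 1 (by omega)]
        show _ = s(((i1+d), (0:Fin 2)), ((i1+d), 1))
        refine hmk _ _ _ _ _ _ ?_ rfl
        push_cast
        ring
      by_cases hklast : k = 2*p-1
      · subst hklast
        left; right
        rw [hceval1 _ (by omega) (by omega), show 2*p-1-p = p-1 by omega,
          show 2*p-1+1 = 2*p by omega, hc2p]
        have h1 : E (p-1) = -(((p-1:ℕ)) : ℤ) := by simp only [hE]; split <;> omega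
        rw [h1, hcast1 1 (by omega)]
        show _ = s((i1, (0:Fin 2)), (i1, 1))
        refine hmk' _ _ _ _ _ _ ?_ rfl
        push_cast
        ring
      rcases Nat.lt_or_ge k p with hkp | hkp
      · -- level 0, k < p-1
        rw [hceval0 k (by omega), hceval0 (k+1) (by omega)]
        rcases Nat.even_or_odd k with ⟨w, hw⟩ | ⟨w, hw⟩
        · -- k even : f_{i1+d} edge
          right; left
          have h1 : E k = -((k:ℕ) : ℤ) := by simp only [hE]; split <;> omega
          have h2 : E (k+1) = ((k:ℕ) : ℤ) + 2 := by simp only [hE]; split <;> omega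
          rw [h1, h2]
          refine ⟨i1 + ((-((k:ℕ) : ℤ) : ℤ) : ZMod p) * d, 0, ?_,
            (hmk _ _ 0 _ _ 0 rfl (by push_cast; ring)).symm⟩
          intro h
          have h' : ((k+1 : ℕ) : ZMod p) * d = 0 := by
            push_cast at h ⊢
            linear_combination -h
          rcases mul_eq_zero.mp h' with h3 | h3
          · exact hne0 (k+1) (by omega) (by omega) h3
          · exact hd0 h3
        · -- k odd : f_{i1} edge
          left; left
          have h1 : E k = ((k:ℕ) : ℤ) + 1 := by simp only [hE]; split <;> omega
          have h2 : E (k+1) = -(((k:ℕ) : ℤ) + 1) := by simp only [hE]; split <;> omega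
          rw [h1, h2]
          refine ⟨i1 + ((((k:ℕ) : ℤ) + 1 : ℤ) : ZMod p) * d, 0, ?_,
            (hmk _ _ 0 _ _ 0 rfl (by push_cast; ring)).symm⟩
          intro h
          have h' : ((k+1 : ℕ) : ZMod p) * d = 0 := by
            push_cast at h ⊢
            linear_combination h
          rcases mul_eq_zero.mp h' with h3 | h3
          · exact hne0 (k+1) (by omega) (by omega) h3
          · exact hd0 h3
      · -- level 1, p ≤ k < 2p-1
        rw [hceval1 k (by omega) (by omega), hceval1 (k+1) (by omega) (by omega),
          show k+1-p = (k-p)+1 by omega]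
        set r := k - p with hr
        rcases Nat.even_or_odd r with ⟨w, hw⟩ | ⟨w, hw⟩
        · -- r even : f_{i1} edge
          left; left
          have h1 : E r = -((r:ℕ) : ℤ) := by simp only [hE]; split <;> omega
          have h2 : E (r+1) = ((r:ℕ) : ℤ) + 2 := by simp only [hE]; split <;> omega
          rw [h1, h2]
          refine ⟨i1 + d - ((-((r:ℕ) : ℤ) : ℤ) : ZMod p) * d, 1, ?_,
            (hmk _ _ 1 _ _ 1 rfl (by push_cast; ring)).symm⟩
          intro h
          have h' : ((r+1 : ℕ) : ZMod p) * d = 0 := by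
            push_cast at h ⊢
            linear_combination h
          rcases mul_eq_zero.mp h' with h3 | h3
          · exact hne0 (r+1) (by omega) (by omega) h3
          · exact hd0 h3
        · -- r odd : f_{i1+d} edge
          right; left
          have h1 : E r = ((r:ℕ) : ℤ) + 1 := by simp only [hE]; split <;> omega
          have h2 : E (r+1) = -(((r:ℕ) : ℤ) + 1) := by simp only [hE]; split <;> omega
          rw [h1, h2]
          refine ⟨i1 + d - ((((r:ℕ) : ℤ) + 1 : ℤ) : ZMod p) * d, 1, ?_,
            (hmk _ _ 1 _ _ 1 rfl (by push_cast; ring)).symm⟩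
          intro h
          have h' : ((r+1 : ℕ) : ZMod p) * d = 0 := by
            push_cast at h ⊢
            linear_combination -h
          rcases mul_eq_zero.mp h' with h3 | h3
          · exact hne0 (r+1) (by omega) (by omega) h3
          · exact hd0 h3
    · rintro ((⟨x, z, hxne, rfl⟩ | rfl) | (⟨x, z, hxne, rfl⟩ | rfl))
      · -- f_{i1} edge
        set v := ((x - i1) * d⁻¹).val with hvdef
        have hvp : v < p := ZMod.val_lt _
        have hx : x = i1 + (v : ZMod p) * d := hval x i1
        have hv0 : v ≠ 0 := fun h => hxne ((hval0 x i1).mp h)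
        fin_cases z
        · rcases Nat.even_or_odd v with ⟨w, hw⟩ | ⟨w, hw⟩
          · -- v even : k = v-1
            refine ⟨v-1, by omega, ?_⟩
            rw [hceval0 (v-1) (by omega), show v-1+1 = v by omega, hceval0 v (by omega)]
            have h1 : E (v-1) = ((v:ℕ) : ℤ) := by simp only [hE]; split <;> omega
            have h2 : E v = -((v:ℕ) : ℤ) := by simp only [hE]; split <;> omega
            rw [h1, h2]
            refine hmk _ _ _ _ _ _ ?_ ?_
            · push_cast; linear_combination hx
            · push_cast; linear_combination -hx
          · -- v odd : k = (p-v)-1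
            refine ⟨p-v-1, by omega, ?_⟩
            rw [hceval0 (p-v-1) (by omega), show p-v-1+1 = p-v by omega,
              hceval0 (p-v) (by omega)]
            have h1 : E (p-v-1) = (((p-v:ℕ)) : ℤ) := by simp only [hE]; split <;> omega
            have h2 : E (p-v) = -(((p-v:ℕ)) : ℤ) := by simp only [hE]; split <;> omega
            rw [h1, h2, hcast1 v (by omega), hcast2 v (by omega)]
            refine hmk' _ _ _ _ _ _ ?_ ?_
            · linear_combination hx
            · linear_combination -hx
        · rcases Nat.even_or_odd v with ⟨w, hw⟩ | ⟨w, hw⟩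
          · -- v even : o = p-v odd, k = p+o-1
            refine ⟨p+(p-v)-1, by omega, ?_⟩
            rw [hceval1 _ (by omega) (by omega), show p+(p-v)-1-p = p-v-1 by omega,
              show p+(p-v)-1+1 = p+(p-v) by omega,
              hceval1 _ (by omega) (by omega), show p+(p-v)-p = p-v by omega]
            have h1 : E (p-v-1) = -((((p-v:ℕ)) : ℤ) - 1) := by
              simp only [hE]; split <;> omega
            have h2 : E (p-v) = (((p-v:ℕ)) : ℤ) + 1 := by
              simp only [hE]; split <;> omega
            rw [h1, h2]
            have hc3 : ((-((((p-v:ℕ)) : ℤ) - 1) : ℤ) : ZMod p) = (v : ZMod p) + 1 := by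
              rw [show (-((((p-v:ℕ)) : ℤ) - 1) : ℤ) = -(((p-v:ℕ)) : ℤ) + 1 by ring]
              push_cast [Nat.cast_sub (by omega : v ≤ p)]
              rw [ZMod.natCast_self]
              ring
            have hc4 : (((((p-v:ℕ)) : ℤ) + 1 : ℤ) : ZMod p) = -(v : ZMod p) + 1 := by
              push_cast [Nat.cast_sub (by omega : v ≤ p)]
              rw [ZMod.natCast_self]
              ring
            rw [hc3, hc4]
            refine hmk' _ _ _ _ _ _ ?_ ?_
            · linear_combination hx
            · linear_combination -hx
          · -- v odd : k = p+v-1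
            refine ⟨p+v-1, by omega, ?_⟩
            rw [hceval1 _ (by omega) (by omega), show p+v-1-p = v-1 by omega,
              show p+v-1+1 = p+v by omega,
              hceval1 _ (by omega) (by omega), show p+v-p = v by omega]
            have h1 : E (v-1) = -(((v:ℕ)) : ℤ) + 1 := by simp only [hE]; split <;> omega
            have h2 : E v = ((v:ℕ) : ℤ) + 1 := by simp only [hE]; split <;> omega
            rw [h1, h2]
            refine hmk _ _ _ _ _ _ ?_ ?_
            · push_cast; linear_combination hx
            · push_cast; linear_combination -hx
      · -- crossing edge of f_{i1} : k = 2p-1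
        refine ⟨2*p-1, by omega, ?_⟩
        rw [hceval1 _ (by omega) (by omega), show 2*p-1-p = p-1 by omega,
          show 2*p-1+1 = 2*p by omega, hc2p]
        have h1 : E (p-1) = -(((p-1:ℕ)) : ℤ) := by simp only [hE]; split <;> omega
        rw [h1, hcast1 1 (by omega)]
        refine hmk' _ _ _ _ _ _ rfl ?_
        push_cast
        ring
      · -- f_{i1+d} edge
        set v := ((x - (i1+d)) * d⁻¹).val with hvdef
        have hvp : v < p := ZMod.val_lt _
        have hx : x = (i1+d) + (v : ZMod p) * d := hval x (i1+d)
        have hv0 : v ≠ 0 := fun h => hxne ((hval0 x (i1+d)).mp h)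
        fin_cases z
        · rcases Nat.even_or_odd v with ⟨w, hw⟩ | ⟨w, hw⟩
          · -- v even : o = p-v odd, k = o-1
            refine ⟨p-v-1, by omega, ?_⟩
            rw [hceval0 (p-v-1) (by omega), show p-v-1+1 = p-v by omega,
              hceval0 (p-v) (by omega)]
            have h1 : E (p-v-1) = -(((p-v:ℕ)) : ℤ) + 1 := by simp only [hE]; split <;> omega
            have h2 : E (p-v) = (((p-v:ℕ)) : ℤ) + 1 := by simp only [hE]; split <;> omega
            have hc5 : ((-(((p-v:ℕ)) : ℤ) + 1 : ℤ) : ZMod p) = (v : ZMod p) + 1 := by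
              push_cast [Nat.cast_sub (by omega : v ≤ p)]
              rw [ZMod.natCast_self]
              ring
            have hc6 : (((((p-v:ℕ)) : ℤ) + 1 : ℤ) : ZMod p) = -(v : ZMod p) + 1 := by
              push_cast [Nat.cast_sub (by omega : v ≤ p)]
              rw [ZMod.natCast_self]
              ring
            rw [h1, h2, hc5, hc6]
            refine hmk _ _ _ _ _ _ ?_ ?_
            · linear_combination hx
            · linear_combination -hx
          · -- v odd : k = v-1 even
            refine ⟨v-1, by omega, ?_⟩
            rw [hceval0 (v-1) (by omega), show v-1+1 = v by omega, hceval0 v (by omega)]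
            have h1 : E (v-1) = -((v:ℕ) : ℤ) + 1 := by simp only [hE]; split <;> omega
            have h2 : E v = ((v:ℕ) : ℤ) + 1 := by simp only [hE]; split <;> omega
            rw [h1, h2]
            refine hmk' _ _ _ _ _ _ ?_ ?_
            · push_cast; linear_combination hx
            · push_cast; linear_combination -hx
        · rcases Nat.even_or_odd v with ⟨w, hw⟩ | ⟨w, hw⟩
          · -- v even : k = p+v-1
            refine ⟨p+v-1, by omega, ?_⟩
            rw [hceval1 _ (by omega) (by omega), show p+v-1-p = v-1 by omega,
              show p+v-1+1 = p+v by omega,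
              hceval1 _ (by omega) (by omega), show p+v-p = v by omega]
            have h1 : E (v-1) = ((v:ℕ) : ℤ) := by simp only [hE]; split <;> omega
            have h2 : E v = -((v:ℕ) : ℤ) := by simp only [hE]; split <;> omega
            rw [h1, h2]
            refine hmk' _ _ _ _ _ _ ?_ ?_
            · push_cast; linear_combination hx
            · push_cast; linear_combination -hx
          · -- v odd : k = p+(p-v)-1
            refine ⟨p+(p-v)-1, by omega, ?_⟩
            rw [hceval1 _ (by omega) (by omega), show p+(p-v)-1-p = p-v-1 by omega,
              show p+(p-v)-1+1 = p+(p-v) by omega,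
              hceval1 _ (by omega) (by omega), show p+(p-v)-p = p-v by omega]
            have h1 : E (p-v-1) = (((p-v:ℕ)) : ℤ) := by simp only [hE]; split <;> omega
            have h2 : E (p-v) = -(((p-v:ℕ)) : ℤ) := by simp only [hE]; split <;> omega
            rw [h1, h2, hcast1 v (by omega), hcast2 v (by omega)]
            refine hmk _ _ _ _ _ _ ?_ ?_
            · linear_combination hx
            · linear_combination -hx
      · -- crossing edge of f_{i1+d} : k = p-1
        refine ⟨p-1, by omega, ?_⟩
        rw [hceval0 (p-1) (by omega), show p-1+1 = p by omega, hcp]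
        have h1 : E (p-1) = -(((p-1:ℕ)) : ℤ) := by simp only [hE]; split <;> omega
        rw [h1, hcast1 1 (by omega)]
        refine hmk _ _ _ _ _ _ ?_ rfl
        push_cast
        ring
  rw [← key]
  apply ham_of_cycle (2*p) (by omega) c
  · rw [hc2p, hc0]
  · exact hinj
  · exact hsurj
/-- `GA_{2p}` is a perfect 1-factorisation of `K_{2p}`: the union of any two distinct
factors among the `f_i` (`i ∈ ℤ_p`) and `g_i` (`i ≠ 0`) is a Hamiltonian cycle. -/

theorem stmt11 (p : ℕ) (hp : p.Prime) (hodd : Odd p) :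
    ∀ h ∈ Set.range (fFac p) ∪ gFac p '' {i : ZMod p | i ≠ 0},
      ∀ h' ∈ Set.range (fFac p) ∪ gFac p '' {i : ZMod p | i ≠ 0},
        h ≠ h' → IsHamCycleEdges (⊤ : SimpleGraph (ZMod p × Fin 2)) (h ∪ h') := by
  haveI : Fact p.Prime := ⟨hp⟩
  intro h hmem h' hmem' hne
  rcases hmem with ⟨i, rfl⟩ | ⟨a, ha, rfl⟩ <;>
    rcases hmem' with ⟨i', rfl⟩ | ⟨b, hb, rfl⟩
  · have hii : i ≠ i' := fun he => hne (by rw [he])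
    have := caseFF p hodd i (i' - i) (sub_ne_zero.mpr hii.symm)
    rwa [show i + (i' - i) = i' by ring] at this
  · exact caseFG p hodd i b hb
  · rw [Set.union_comm]
    exact caseFG p hodd i' a ha
  · have hab : a ≠ b := fun he => hne (by rw [he])
    exact caseG p hodd a b hab
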